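/- Let Ω be a finite probability space with binary random variables Y, Y* and a random variable S. Assume one-sided label-dependent noise: P(Y=1,Y*=0) = 0 and Y is conditionally independent of S given Y*, with noise rate γ = P(Y=0|Y*=1). Then for every value s with P(S=s) > 0 and P(Y*=1|S=s) well-defined, E[Y | S=s] = (1-γ)·E[Y* | S=s]. In particular, if additionally a group variable A satisfies the same assumptions with the same γ in each group, then E[Y|S=s,A=a] = (1-γ)·E[Y*|S=s,A=a], so calibration of S with respect to Y across groups is equivalent to calibration with respect to Y*. -/

import Mathlib

open Classical

/-- Probability of an event under a weight function on a finite type. -/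
noncomputable def Pr {Ω : Type*} [Fintype Ω] (p : Ω → ℝ) (E : Ω → Prop) : ℝ :=
  ∑ ω, if E ω then p ω else 0

lemma Pr_congr {Ω : Type*} [Fintype Ω] (p : Ω → ℝ) {E F : Ω → Prop}
    (h : ∀ ω, E ω ↔ F ω) : Pr p E = Pr p F := by
  unfold Pr; congr 1; funext ω; simp [h ω]

lemma Pr_split {Ω : Type*} [Fintype Ω] (p : Ω → ℝ) (E Q : Ω → Prop) :
    Pr p E = Pr p (fun ω => E ω ∧ Q ω) + Pr p (fun ω => E ω ∧ ¬ Q ω) := by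
  unfold Pr
  rw [← Finset.sum_add_distrib]
  congr 1; funext ω
  by_cases hE : E ω <;> by_cases hQ : Q ω <;> simp [hE, hQ]

lemma Pr_mono_zero {Ω : Type*} [Fintype Ω] (p : Ω → ℝ) (hp : ∀ ω, 0 ≤ p ω)
    {E F : Ω → Prop} (h : ∀ ω, E ω → F ω) (hF : Pr p F = 0) : Pr p E = 0 := by
  have hle : Pr p E ≤ Pr p F := by
    unfold Pr
    apply Finset.sum_le_sum
    intro ω _
    by_cases hE : E ω
    · simp [hE, h ω hE]
    · simp only [hE, if_false]
      split_ifs with hF'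
      · exact hp ω
      · exact le_refl 0
  have hge : 0 ≤ Pr p E := by
    unfold Pr
    apply Finset.sum_nonneg
    intro ω _
    split_ifs with h'
    · exact hp ω
    · exact le_refl 0
  linarith

theorem stmt_18 {Ω : Type*} [Fintype Ω] (p : Ω → ℝ)
    (hp : ∀ ω, 0 ≤ p ω) (hp1 : ∑ ω, p ω = 1)
    (Y Ystar : Ω → ℕ) (S : Ω → ℝ) (A : Ω → Bool)
    (hbinY : ∀ ω, Y ω = 0 ∨ Y ω = 1)
    (hbinYs : ∀ ω, Ystar ω = 0 ∨ Ystar ω = 1)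
    -- one-sided noise: no false positives in the observed label
    (honesided : Pr p (fun ω => Y ω = 1 ∧ Ystar ω = 0) = 0)
    -- Y ⊥ (S, A) ∣ Y*
    (hCI : ∀ (b c : ℕ) (s : ℝ) (a : Bool),
      Pr p (fun ω => Y ω = b ∧ S ω = s ∧ A ω = a ∧ Ystar ω = c) * Pr p (fun ω => Ystar ω = c)
        = Pr p (fun ω => Y ω = b ∧ Ystar ω = c)
          * Pr p (fun ω => S ω = s ∧ A ω = a ∧ Ystar ω = c))
    (hYs1 : 0 < Pr p (fun ω => Ystar ω = 1))
    (γ : ℝ)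
    (hγ : γ = Pr p (fun ω => Y ω = 0 ∧ Ystar ω = 1) / Pr p (fun ω => Ystar ω = 1)) :
    (∀ s : ℝ, 0 < Pr p (fun ω => S ω = s) →
      Pr p (fun ω => Y ω = 1 ∧ S ω = s) / Pr p (fun ω => S ω = s)
        = (1 - γ) * (Pr p (fun ω => Ystar ω = 1 ∧ S ω = s) / Pr p (fun ω => S ω = s)))
    ∧ (∀ (s : ℝ) (a : Bool), 0 < Pr p (fun ω => S ω = s ∧ A ω = a) →
      Pr p (fun ω => Y ω = 1 ∧ S ω = s ∧ A ω = a) / Pr p (fun ω => S ω = s ∧ A ω = a)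
        = (1 - γ) * (Pr p (fun ω => Ystar ω = 1 ∧ S ω = s ∧ A ω = a)
            / Pr p (fun ω => S ω = s ∧ A ω = a))) := by
  have hYsne : Pr p (fun ω => Ystar ω = 1) ≠ 0 := ne_of_gt hYs1
  -- P(Y=1 ∧ Ystar=1) = (1-γ) * P(Ystar=1)
  have hY1Ys1 : Pr p (fun ω => Y ω = 1 ∧ Ystar ω = 1)
      = (1 - γ) * Pr p (fun ω => Ystar ω = 1) := by
    have hsplit := Pr_split p (fun ω => Ystar ω = 1) (fun ω => Y ω = 1)
    have h0 : Pr p (fun ω => Ystar ω = 1 ∧ ¬ Y ω = 1)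
        = Pr p (fun ω => Y ω = 0 ∧ Ystar ω = 1) := by
      apply Pr_congr
      intro ω
      rcases hbinY ω with h | h <;> simp [h]
    have h1 : Pr p (fun ω => Ystar ω = 1 ∧ Y ω = 1)
        = Pr p (fun ω => Y ω = 1 ∧ Ystar ω = 1) := Pr_congr p (fun ω => and_comm)
    rw [h0, h1] at hsplit
    have hγ' : Pr p (fun ω => Y ω = 0 ∧ Ystar ω = 1) = γ * Pr p (fun ω => Ystar ω = 1) := by
      rw [hγ]; exact (div_mul_cancel₀ _ hYsne).symm
    rw [hγ'] at hsplit
    linarith [hsplit]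
  -- The key numerator identity per group
  have key : ∀ (s : ℝ) (a : Bool),
      Pr p (fun ω => Y ω = 1 ∧ S ω = s ∧ A ω = a)
        = (1 - γ) * Pr p (fun ω => Ystar ω = 1 ∧ S ω = s ∧ A ω = a) := by
    intro s a
    have hzero : Pr p (fun ω => (Y ω = 1 ∧ S ω = s ∧ A ω = a) ∧ ¬ Ystar ω = 1) = 0 := by
      apply Pr_mono_zero p hp _ honesided
      intro ω ⟨⟨h1, _, _⟩, h2⟩
      exact ⟨h1, (hbinYs ω).resolve_right h2⟩
    have hsplit := Pr_split p (fun ω => Y ω = 1 ∧ S ω = s ∧ A ω = a) (fun ω => Ystar ω = 1)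
    rw [hzero, add_zero] at hsplit
    have hre : Pr p (fun ω => (Y ω = 1 ∧ S ω = s ∧ A ω = a) ∧ Ystar ω = 1)
        = Pr p (fun ω => Y ω = 1 ∧ S ω = s ∧ A ω = a ∧ Ystar ω = 1) := by
      apply Pr_congr; intro ω; tauto
    rw [hre] at hsplit
    have hci := hCI 1 1 s a
    rw [hY1Ys1] at hci
    have h4 : Pr p (fun ω => Y ω = 1 ∧ S ω = s ∧ A ω = a ∧ Ystar ω = 1)
        = (1 - γ) * Pr p (fun ω => S ω = s ∧ A ω = a ∧ Ystar ω = 1) := by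
      apply mul_right_cancel₀ hYsne
      rw [hci]; ring
    have hre2 : Pr p (fun ω => S ω = s ∧ A ω = a ∧ Ystar ω = 1)
        = Pr p (fun ω => Ystar ω = 1 ∧ S ω = s ∧ A ω = a) := by
      apply Pr_congr; intro ω; tauto
    rw [hsplit, h4, hre2]
  constructor
  · intro s hs
    -- sum over a
    have hYsum : Pr p (fun ω => Y ω = 1 ∧ S ω = s)
        = Pr p (fun ω => Y ω = 1 ∧ S ω = s ∧ A ω = true)
          + Pr p (fun ω => Y ω = 1 ∧ S ω = s ∧ A ω = false) := by
      have := Pr_split p (fun ω => Y ω = 1 ∧ S ω = s) (fun ω => A ω = true)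
      rw [this]; congr 1
      · apply Pr_congr; intro ω; tauto
      · apply Pr_congr; intro ω; simp; tauto
    have hYssum : Pr p (fun ω => Ystar ω = 1 ∧ S ω = s)
        = Pr p (fun ω => Ystar ω = 1 ∧ S ω = s ∧ A ω = true)
          + Pr p (fun ω => Ystar ω = 1 ∧ S ω = s ∧ A ω = false) := by
      have := Pr_split p (fun ω => Ystar ω = 1 ∧ S ω = s) (fun ω => A ω = true)
      rw [this]; congr 1
      · apply Pr_congr; intro ω; tauto
      · apply Pr_congr; intro ω; simp; tauto
    rw [hYsum, key s true, key s false, hYssum]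
    ring
  · intro s a hsa
    rw [key s a]
    ring
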